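/- For every real exponent m with 1 < m < 2, there exists a constant C_m > 0 such that for all real numbers a, b, |a-b|^m ≤ C_m ((|a|^{m-2}a - |b|^{m-2}b)(a-b))^{m/2} (|a|^m + |b|^m)^{(2-m)/2}. -/

import Mathlib

open Real

lemma core1d (m t : ℝ) (hm1 : 1 < m) (hm2 : m < 2) (ht1 : -1 ≤ t) (ht2 : t ≤ 1) :
    (m - 1) * (1 - t) ≤ 1 - |t| ^ (m - 2) * t := by
  rcases le_or_gt 0 t with ht | ht
  · have h1 : |t| ^ (m - 2) * t = t ^ (m - 1) := by
      rcases eq_or_lt_of_le ht with h | h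
      · rw [← h, abs_zero, Real.zero_rpow (by linarith : m - 2 ≠ 0),
          Real.zero_rpow (by linarith : m - 1 ≠ 0)]; ring
      · rw [abs_of_nonneg ht, show m - 1 = (m - 2) + 1 by ring, Real.rpow_add_one h.ne']
    rw [h1]
    have hb : t ^ (m - 1) ≤ 1 + (m - 1) * (t - 1) := by
      have := rpow_one_add_le_one_add_mul_self (s := t - 1) (by linarith) (p := m - 1)
        (by linarith) (by linarith)
      simpa using this
    linarith
  · have habs : |t| = -t := abs_of_neg ht
    have h1 : |t| ^ (m - 2) * t = -((-t) ^ (m - 1)) := by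
      rw [habs, show m - 1 = (m - 2) + 1 by ring,
        Real.rpow_add_one (by linarith : (-t) ≠ 0)]
      ring
    rw [h1]
    have h2 : -t ≤ (-t) ^ (m - 1) := by
      nth_rewrite 1 [← Real.rpow_one (-t)]
      exact Real.rpow_le_rpow_of_exponent_ge (by linarith) (by linarith) (by linarith)
    nlinarith [h2]

-- normalized: 0 < a, |b| ≤ a
lemma step2 (m a b : ℝ) (hm1 : 1 < m) (hm2 : m < 2) (ha : 0 < a) (hb : |b| ≤ a) :
    (m - 1) * (a - b) ^ 2 * a ^ (m - 2) ≤ (|a| ^ (m - 2) * a - |b| ^ (m - 2) * b) * (a - b) := by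
  set t := b / a with htdef
  have hab : |b| / a = |t| := by rw [htdef, abs_div, abs_of_pos ha]
  have ht : |t| ≤ 1 := by rw [← hab]; exact div_le_one_of_le₀ hb ha.le
  have ht1 : -1 ≤ t := neg_le_of_abs_le ht
  have ht2 : t ≤ 1 := le_of_abs_le ht
  have hA := core1d m t hm1 hm2 ht1 ht2
  have hbt : b = t * a := by rw [htdef, div_mul_cancel₀ b ha.ne']
  have habs : |b| = |t| * a := by
    rw [hbt, abs_mul, abs_of_pos ha]
  have e1 : |b| ^ (m - 2) = |t| ^ (m - 2) * a ^ (m - 2) := by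
    rw [habs, Real.mul_rpow (abs_nonneg t) ha.le]
  have hap : (0:ℝ) ≤ a ^ (m - 2) := Real.rpow_nonneg ha.le _
  rw [abs_of_pos ha, e1, hbt]
  have key := mul_le_mul_of_nonneg_right hA
    (mul_nonneg (by linarith) (by positivity) : (0:ℝ) ≤ (1 - t) * (a ^ (m - 2) * a ^ 2))
  nlinarith [key]

-- |b| ≤ |a| version
lemma step3 (m a b : ℝ) (hm1 : 1 < m) (hm2 : m < 2) (hba : |b| ≤ |a|) :
    (m - 1) * (a - b) ^ 2 * |a| ^ (m - 2) ≤ (|a| ^ (m - 2) * a - |b| ^ (m - 2) * b) * (a - b) := by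
  rcases lt_trichotomy a 0 with ha | ha | ha
  · have h1 : |(-b)| ≤ -a := by rw [abs_neg]; rw [abs_of_neg ha] at hba; exact hba
    have := step2 m (-a) (-b) hm1 hm2 (by linarith) h1
    rw [abs_neg, abs_neg] at this
    rw [abs_of_neg ha] at this ⊢
    nlinarith [this]
  · have hb : b = 0 := by
      have : |b| ≤ 0 := by simpa [ha] using hba
      exact abs_eq_zero.mp (le_antisymm this (abs_nonneg b))
    simp [ha, hb, Real.zero_rpow (by linarith : m - 2 ≠ 0)]
  · have := step2 m a b hm1 hm2 ha (by rwa [abs_of_pos ha] at hba)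
    rwa [abs_of_pos ha] at this ⊢

-- full version with max
lemma step4 (m a b : ℝ) (hm1 : 1 < m) (hm2 : m < 2) :
    (m - 1) * (a - b) ^ 2 * (max |a| |b|) ^ (m - 2)
      ≤ (|a| ^ (m - 2) * a - |b| ^ (m - 2) * b) * (a - b) := by
  rcases le_total |b| |a| with h | h
  · rw [max_eq_left h]; exact step3 m a b hm1 hm2 h
  · rw [max_eq_right h]
    have := step3 m b a hm1 hm2 h
    nlinarith [this]

theorem stmt_5 (m : ℝ) (hm1 : 1 < m) (hm2 : m < 2) :
    ∃ C : ℝ, 0 < C ∧ ∀ a b : ℝ,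
      |a - b| ^ m ≤ C * ((|a| ^ (m - 2) * a - |b| ^ (m - 2) * b) * (a - b)) ^ (m / 2)
        * (|a| ^ m + |b| ^ m) ^ ((2 - m) / 2) := by
  have hm0 : (0:ℝ) < m - 1 := by linarith
  refine ⟨(m - 1) ^ (-(m / 2)), Real.rpow_pos_of_pos hm0 _, fun a b => ?_⟩
  set M := max |a| |b| with hM
  rcases eq_or_lt_of_le (le_max_iff.mpr (Or.inl (abs_nonneg a)) : (0:ℝ) ≤ M) with h0 | hMpos
  · -- M = 0, so a = b = 0
    have ha : a = 0 := abs_eq_zero.mp (le_antisymm (h0 ▸ le_max_left _ _) (abs_nonneg a))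
    have hb : b = 0 := abs_eq_zero.mp (le_antisymm (h0 ▸ le_max_right _ _) (abs_nonneg b))
    simp [ha, hb, Real.zero_rpow (by linarith : m ≠ 0),
      Real.zero_rpow (by positivity : m / 2 ≠ 0)]
  · set D := (|a| ^ (m - 2) * a - |b| ^ (m - 2) * b) * (a - b) with hD
    have key := step4 m a b hm1 hm2
    have hL : (0:ℝ) ≤ (m - 1) * (a - b) ^ 2 * M ^ (m - 2) := by positivity
    have hDnn : (0:ℝ) ≤ D := le_trans hL key
    have hSM : M ^ m ≤ |a| ^ m + |b| ^ m := by
      rcases le_total |b| |a| with h | h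
      · rw [hM, max_eq_left h]
        nlinarith [Real.rpow_nonneg (abs_nonneg b) m]
      · rw [hM, max_eq_right h]
        nlinarith [Real.rpow_nonneg (abs_nonneg a) m]
    have s1 : ((m - 1) * (a - b) ^ 2 * M ^ (m - 2)) ^ (m / 2) ≤ D ^ (m / 2) :=
      Real.rpow_le_rpow hL key (by positivity)
    have s2 : (M ^ m) ^ ((2 - m) / 2) ≤ (|a| ^ m + |b| ^ m) ^ ((2 - m) / 2) :=
      Real.rpow_le_rpow (by positivity) hSM (by linarith)
    -- identity: the lower bound product equals |a-b|^m / C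
    have hid : (m - 1) ^ (-(m / 2)) * ((m - 1) * (a - b) ^ 2 * M ^ (m - 2)) ^ (m / 2)
        * (M ^ m) ^ ((2 - m) / 2) = |a - b| ^ m := by
      have e1 : ((m - 1) * (a - b) ^ 2 * M ^ (m - 2)) ^ (m / 2)
          = (m - 1) ^ (m / 2) * ((a - b) ^ 2) ^ (m / 2) * (M ^ (m - 2)) ^ (m / 2) := by
        rw [Real.mul_rpow (by positivity) (Real.rpow_nonneg hMpos.le _),
          Real.mul_rpow hm0.le (by positivity)]
      have e2 : ((a - b) ^ 2) ^ (m / 2) = |a - b| ^ m := by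
        rw [← sq_abs, ← Real.rpow_natCast |a - b| 2, ← Real.rpow_mul (abs_nonneg _),
          show ((2:ℕ):ℝ) * (m / 2) = m by push_cast; ring]
      have e3 : (M ^ (m - 2)) ^ (m / 2) * (M ^ m) ^ ((2 - m) / 2) = 1 := by
        rw [← Real.rpow_mul hMpos.le, ← Real.rpow_mul hMpos.le, ← Real.rpow_add hMpos,
          show (m - 2) * (m / 2) + m * ((2 - m) / 2) = 0 by ring, Real.rpow_zero]
      have e4 : (m - 1) ^ (-(m / 2)) * (m - 1) ^ (m / 2) = 1 := by
        rw [← Real.rpow_add hm0, neg_add_cancel, Real.rpow_zero]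
      calc (m - 1) ^ (-(m / 2)) * ((m - 1) * (a - b) ^ 2 * M ^ (m - 2)) ^ (m / 2)
            * (M ^ m) ^ ((2 - m) / 2)
          = ((m - 1) ^ (-(m / 2)) * (m - 1) ^ (m / 2)) * ((a - b) ^ 2) ^ (m / 2)
            * ((M ^ (m - 2)) ^ (m / 2) * (M ^ m) ^ ((2 - m) / 2)) := by rw [e1]; ring
        _ = |a - b| ^ m := by rw [e2, e3, e4]; ring
    calc |a - b| ^ m
        = (m - 1) ^ (-(m / 2)) * ((m - 1) * (a - b) ^ 2 * M ^ (m - 2)) ^ (m / 2)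
            * (M ^ m) ^ ((2 - m) / 2) := hid.symm
      _ ≤ (m - 1) ^ (-(m / 2)) * D ^ (m / 2) * (M ^ m) ^ ((2 - m) / 2) := by
          apply mul_le_mul_of_nonneg_right _ (by positivity)
          exact mul_le_mul_of_nonneg_left s1 (by positivity)
      _ ≤ (m - 1) ^ (-(m / 2)) * D ^ (m / 2) * (|a| ^ m + |b| ^ m) ^ ((2 - m) / 2) := by
          apply mul_le_mul_of_nonneg_left s2 (by positivity)
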